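/- Fix an integer L ≥ 1 and define P(s) = g^{(L)}(s)/g^{(L−1)}(s). Then P has the following asymptotics at −∞: there exist constants C > 0 and s₀ > 0 such that for all s ≤ −s₀, | P(s) + L/s | ≤ C·(−s)^{L−1}·e^{s}. -/

import Mathlib

/-- `g(s) = (e^s - 1)/s` for `s ≠ 0`, extended by `g(0) = 1`. -/
noncomputable def g (s : ℝ) : ℝ := if s = 0 then 1 else (Real.exp s - 1) / s

/-- Closed-form recursion for the iterated derivatives of `g` away from `0`. -/
noncomputable def G : ℕ → ℝ → ℝ
  | 0 => fun s => (Real.exp s - 1) / s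
  | (n + 1) => fun s => (Real.exp s - ((n : ℝ) + 1) * G n s) / s

lemma G_hasDerivAt : ∀ n : ℕ, ∀ s : ℝ, s ≠ 0 → HasDerivAt (G n) (G (n + 1) s) s := by
  intro n
  induction n with
  | zero =>
    intro s hs
    have h := (((Real.hasDerivAt_exp s).sub_const 1).div (hasDerivAt_id s) hs)
    have heq : (Real.exp s * id s - (Real.exp s - 1) * 1) / id s ^ 2 = G (0 + 1) s := by
      simp only [id_eq, G]
      push_cast
      rw [div_eq_div_iff (pow_ne_zero 2 hs) hs]
      field_simp
      ring
    exact heq ▸ h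
  | succ n ih =>
    intro s hs
    have h := (((Real.hasDerivAt_exp s).sub ((ih s hs).const_mul ((n : ℝ) + 1))).div
      (hasDerivAt_id s) hs)
    have heq : (Real.exp s * id s - ((n : ℝ) + 1) * G (n + 1) s * id s -
        (Real.exp s - ((n : ℝ) + 1) * G n s) * 1) / id s ^ 2 = G (n + 1 + 1) s := by
      simp only [id_eq]
      have h1 : G (n + 1) s = (Real.exp s - ((n : ℝ) + 1) * G n s) / s := rfl
      have h2 : G (n + 1 + 1) s =
          (Real.exp s - (((n + 1 : ℕ) : ℝ) + 1) * G (n + 1) s) / s := rfl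
      rw [h2, h1]
      push_cast
      rw [div_eq_div_iff (pow_ne_zero 2 hs) hs]
      field_simp
      ring
    have h' : HasDerivAt (G (n + 1)) ((Real.exp s * id s - ((n : ℝ) + 1) * G (n + 1) s * id s -
        (Real.exp s - ((n : ℝ) + 1) * G n s) * 1) / id s ^ 2) s := by
      exact h.congr_deriv (by simp only [Pi.sub_apply]; ring)
    exact heq ▸ h'

lemma iteratedDeriv_g_eq : ∀ n : ℕ, ∀ s : ℝ, s < 0 → iteratedDeriv n g s = G n s := by
  intro n
  induction n with
  | zero =>
    intro s hs
    simp only [iteratedDeriv_zero, g, if_neg hs.ne, G]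
  | succ n ih =>
    intro s hs
    rw [iteratedDeriv_succ]
    have hev : iteratedDeriv n g =ᶠ[nhds s] G n := by
      filter_upwards [Iio_mem_nhds hs] with x hx
      exact ih x hx
    rw [hev.deriv_eq, (G_hasDerivAt n s hs.ne).deriv]

lemma G_lower : ∀ n : ℕ, ∃ a > (0 : ℝ), ∃ s₀ ≥ (1 : ℝ), ∀ t : ℝ, s₀ ≤ t →
    a / t ^ (n + 1) ≤ G n (-t) := by
  intro n
  induction n with
  | zero =>
    have he1 : Real.exp (-1) < 1 := Real.exp_lt_one_iff.2 (by norm_num)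
    refine ⟨1 - Real.exp (-1), by linarith, 1, le_refl 1, fun t ht => ?_⟩
    have ht0 : (0 : ℝ) < t := lt_of_lt_of_le one_pos ht
    have hG0 : G 0 (-t) = (1 - Real.exp (-t)) / t := by
      show (Real.exp (-t) - 1) / (-t) = _
      rw [div_neg, ← neg_div, neg_sub]
    rw [hG0, pow_one]
    have hexp : Real.exp (-t) ≤ Real.exp (-1) := Real.exp_le_exp.2 (by linarith)
    gcongr
  | succ n ih =>
    obtain ⟨a, ha, s₀, hs₀, h⟩ := ih
    set F : ℝ := (Nat.factorial (n + 2) : ℝ) with hF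
    have hFpos : (0 : ℝ) < F := by positivity
    refine ⟨((n : ℝ) + 1) * a / 2, by positivity,
      max s₀ (2 * F / (((n : ℝ) + 1) * a)), le_trans hs₀ (le_max_left _ _),
      fun t ht => ?_⟩
    have ht1 : (1 : ℝ) ≤ t := le_trans hs₀ (le_trans (le_max_left _ _) ht)
    have ht0 : (0 : ℝ) < t := lt_of_lt_of_le one_pos ht1
    have hts : s₀ ≤ t := le_trans (le_max_left _ _) ht
    have htf : 2 * F / (((n : ℝ) + 1) * a) ≤ t := le_trans (le_max_right _ _) ht
    have hexp_ge : t ^ (n + 2) / F ≤ Real.exp t := by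
      simpa [hF] using Real.pow_div_factorial_le_exp t ht0.le (n + 2)
    have hpow : (0 : ℝ) < t ^ (n + 2) := by positivity
    have hexp_pos : (0 : ℝ) < Real.exp t := Real.exp_pos t
    have hle1 : Real.exp (-t) ≤ F / t ^ (n + 2) := by
      rw [Real.exp_neg, inv_eq_one_div, div_le_div_iff₀ hexp_pos hpow]
      have h2 : t ^ (n + 2) ≤ Real.exp t * F := (div_le_iff₀ hFpos).1 hexp_ge
      linarith
    have hle2 : F / t ^ (n + 2) ≤ ((n : ℝ) + 1) * a / (2 * t ^ (n + 1)) := by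
      rw [div_le_div_iff₀ (by positivity) (by positivity)]
      have h1 : 2 * F ≤ t * (((n : ℝ) + 1) * a) := by
        rw [div_le_iff₀ (by positivity)] at htf
        linarith
      calc F * (2 * t ^ (n + 1)) = (2 * F) * t ^ (n + 1) := by ring
        _ ≤ (t * (((n : ℝ) + 1) * a)) * t ^ (n + 1) :=
            mul_le_mul_of_nonneg_right h1 (by positivity)
        _ = ((n : ℝ) + 1) * a * t ^ (n + 2) := by ring
    have key : Real.exp (-t) ≤ ((n : ℝ) + 1) * a / (2 * t ^ (n + 1)) := le_trans hle1 hle2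
    have hGn := h t hts
    have hG : G (n + 1) (-t) = (((n : ℝ) + 1) * G n (-t) - Real.exp (-t)) / t := by
      show (Real.exp (-t) - ((n : ℝ) + 1) * G n (-t)) / (-t) = _
      rw [div_neg, ← neg_div, neg_sub]
    rw [hG, div_le_div_iff₀ (by positivity) ht0]
    have hGb : ((n : ℝ) + 1) * (a / t ^ (n + 1)) ≤ ((n : ℝ) + 1) * G n (-t) :=
      mul_le_mul_of_nonneg_left hGn (by positivity)
    have e1 : ((n : ℝ) + 1) * (a / t ^ (n + 1)) * t ^ (n + 1) = ((n : ℝ) + 1) * a := by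
      field_simp
    have e2 : ((n : ℝ) + 1) * a / (2 * t ^ (n + 1)) * t ^ (n + 1) = ((n : ℝ) + 1) * a / 2 := by
      field_simp
    have hGb' : ((n : ℝ) + 1) * a ≤ ((n : ℝ) + 1) * G n (-t) * t ^ (n + 1) := by
      calc ((n : ℝ) + 1) * a = ((n : ℝ) + 1) * (a / t ^ (n + 1)) * t ^ (n + 1) := e1.symm
        _ ≤ ((n : ℝ) + 1) * G n (-t) * t ^ (n + 1) :=
            mul_le_mul_of_nonneg_right hGb (by positivity)
    have key' : Real.exp (-t) * t ^ (n + 1) ≤ ((n : ℝ) + 1) * a / 2 := by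
      calc Real.exp (-t) * t ^ (n + 1)
          ≤ ((n : ℝ) + 1) * a / (2 * t ^ (n + 1)) * t ^ (n + 1) :=
            mul_le_mul_of_nonneg_right key (by positivity)
        _ = ((n : ℝ) + 1) * a / 2 := e2
    have expand : ((n : ℝ) + 1) * a / 2
        ≤ (((n : ℝ) + 1) * G n (-t) - Real.exp (-t)) * t ^ (n + 1) := by
      have heq : (((n : ℝ) + 1) * G n (-t) - Real.exp (-t)) * t ^ (n + 1)
          = ((n : ℝ) + 1) * G n (-t) * t ^ (n + 1) - Real.exp (-t) * t ^ (n + 1) := by ring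
      rw [heq]
      linarith
    calc ((n : ℝ) + 1) * a / 2 * t
        ≤ (((n : ℝ) + 1) * G n (-t) - Real.exp (-t)) * t ^ (n + 1) * t :=
          mul_le_mul_of_nonneg_right expand ht0.le
      _ = (((n : ℝ) + 1) * G n (-t) - Real.exp (-t)) * t ^ (n + 1 + 1) := by ring

/-- Asymptotics of `P(s) = g^{(L)}(s)/g^{(L-1)}(s)` at `-∞`:
`P(s) = -L/s + O((-s)^{L-1} e^s)`. -/
theorem su11_P_asymptotics_neg_infty (L : ℕ) (hL : 1 ≤ L) :
    ∃ C > 0, ∃ s₀ > (0 : ℝ), ∀ s : ℝ, s ≤ -s₀ →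
      |iteratedDeriv L g s / iteratedDeriv (L - 1) g s + (L : ℝ) / s| ≤
        C * (-s) ^ (L - 1) * Real.exp s := by
  obtain ⟨n, rfl⟩ : ∃ n, L = n + 1 := ⟨L - 1, (Nat.succ_pred_eq_of_pos hL).symm⟩
  obtain ⟨a, ha, s₀, hs₀, hG⟩ := G_lower n
  refine ⟨1 / a, by positivity, s₀, lt_of_lt_of_le one_pos hs₀, fun s hs => ?_⟩
  have hs1 : (1 : ℝ) ≤ -s := le_trans hs₀ (by linarith)
  have hsneg : s < 0 := by linarith
  have hsne : s ≠ 0 := ne_of_lt hsneg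
  have h0 : (0 : ℝ) < -s := by linarith
  have hne : -s ≠ 0 := ne_of_gt h0
  have hGn : a / (-s) ^ (n + 1) ≤ G n s := by
    have := hG (-s) (by linarith)
    rwa [neg_neg] at this
  have hGpos : 0 < G n s := lt_of_lt_of_le (by positivity) hGn
  have hGs : G n s ≠ 0 := ne_of_gt hGpos
  have hL1 : n + 1 - 1 = n := rfl
  rw [hL1, iteratedDeriv_g_eq (n + 1) s hsneg, iteratedDeriv_g_eq n s hsneg]
  have hkey : G (n + 1) s / G n s + (((n + 1 : ℕ) : ℝ)) / s = Real.exp s / (s * G n s) := by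
    have hg1 : G (n + 1) s = (Real.exp s - ((n : ℝ) + 1) * G n s) / s := rfl
    rw [hg1]
    push_cast
    field_simp
    ring
  rw [hkey, abs_div, abs_of_pos (Real.exp_pos _),
    abs_of_neg (show s * G n s < 0 by nlinarith)]
  have hden : -(s * G n s) = (-s) * G n s := by ring
  rw [hden]
  calc Real.exp s / ((-s) * G n s)
      ≤ Real.exp s / ((-s) * (a / (-s) ^ (n + 1))) :=
        div_le_div_of_nonneg_left (Real.exp_pos s).le (by positivity)
          (mul_le_mul_of_nonneg_left hGn h0.le)
    _ = 1 / a * (-s) ^ n * Real.exp s := by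
        field_simp
        ring
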